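/- Fix k ≥ 1 and suppose the sequences S, C, X are random variables on a probability space whose sample paths satisfy the queue and estimator definitions, such that X_{k−d} has mean p and is independent of the pair (S_{k−d}, C_{k−d}). Then E[Q̂^r_{k+1}] ≥ E[Q̂^r_k] + p·E[S_k] − (1−p)·E[C_k]. -/

import Mathlib

open MeasureTheory ProbabilityTheory

/-- Expected drift of the estimator: if `X_{k−d}` has mean `p` and is independent
of the pair `(S_{k−d}, C_{k−d})`, then
`E[Q̂^r_{k+1}] ≥ E[Q̂^r_k] + p·E[S_k] − (1−p)·E[C_k]`. -/
theorem stmt_8 {Ω : Type*} [MeasurableSpace Ω] (μ : Measure Ω) [IsProbabilityMeasure μ]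
    (d : ℤ) (hd : 1 ≤ d) (p : ℝ) (hp0 : 0 ≤ p) (hp1 : p ≤ 1) (q0 : ℕ)
    (S C X Qr Qhat : ℤ → Ω → ℝ)
    (hS : ∀ k ω, S k ω = 0 ∨ S k ω = 1)
    (hC : ∀ k ω, C k ω = 0 ∨ C k ω = 1)
    (hXv : ∀ k ω, X k ω = 0 ∨ X k ω = 1)
    (hSC : ∀ k ω, S k ω + C k ω ≤ 1)
    (hS0 : ∀ j ≤ (0 : ℤ), ∀ ω, S j ω = 0)
    (hC0 : ∀ j ≤ (0 : ℤ), ∀ ω, C j ω = 0)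
    (hX0 : ∀ j ≤ (0 : ℤ), ∀ ω, X j ω = 0)
    (hQinit : ∀ j ≤ (1 : ℤ), ∀ ω, Qr j ω = (q0 : ℝ))
    (hQrec : ∀ k ≥ (1 : ℤ), ∀ ω,
      Qr (k + 1) ω = max 0 (Qr k ω + S k ω * X k ω - C k ω * (1 - X k ω)))
    (hQhat : ∀ k ≥ (1 : ℤ), ∀ ω,
      Qhat k ω = Qr (k - d) ω + ∑ j ∈ Finset.Ico (k - d) k, (S j ω * p - C j ω * (1 - p)))
    (hmeasS : ∀ j, Measurable (S j))
    (hmeasC : ∀ j, Measurable (C j))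
    (hmeasX : ∀ j, Measurable (X j))
    (k : ℤ) (hk : 1 ≤ k)
    (hXmean : ∫ ω, X (k - d) ω ∂μ = p)
    (hXindep : IndepFun (X (k - d)) (fun ω => (S (k - d) ω, C (k - d) ω)) μ) :
    (∫ ω, Qhat k ω ∂μ) + p * (∫ ω, S k ω ∂μ) - (1 - p) * (∫ ω, C k ω ∂μ)
      ≤ ∫ ω, Qhat (k + 1) ω ∂μ := by
  set m : ℤ := k - d with hm
  -- basic bounds on {0,1}-valued functions
  have habsS : ∀ j ω, |S j ω| ≤ 1 := by
    intro j ω; rcases hS j ω with h | h <;> rw [h] <;> norm_num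
  have habsC : ∀ j ω, |C j ω| ≤ 1 := by
    intro j ω; rcases hC j ω with h | h <;> rw [h] <;> norm_num
  have habsX : ∀ j ω, |X j ω| ≤ 1 := by
    intro j ω; rcases hXv j ω with h | h <;> rw [h] <;> norm_num
  -- integrability of bounded measurable functions
  have hint : ∀ f : Ω → ℝ, Measurable f → (∃ M : ℝ, ∀ ω, |f ω| ≤ M) → Integrable f μ := by
    rintro f hf ⟨M, hM⟩
    exact ⟨hf.aestronglyMeasurable,
      HasFiniteIntegral.of_bounded (C := M) (ae_of_all _ (by
        intro ω; simpa [Real.norm_eq_abs] using hM ω))⟩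
  have hintS : ∀ j, Integrable (S j) μ := fun j => hint _ (hmeasS j) ⟨1, habsS j⟩
  have hintC : ∀ j, Integrable (C j) μ := fun j => hint _ (hmeasC j) ⟨1, habsC j⟩
  have hintX : ∀ j, Integrable (X j) μ := fun j => hint _ (hmeasX j) ⟨1, habsX j⟩
  -- measurability and boundedness of Qr
  have hQr : ∀ j : ℤ, Measurable (Qr j) ∧ ∃ M : ℝ, ∀ ω, |Qr j ω| ≤ M := by
    have h0 : Measurable (Qr 1) ∧ ∃ M : ℝ, ∀ ω, |Qr 1 ω| ≤ M := by
      have he : Qr 1 = fun _ => (q0 : ℝ) := funext (hQinit 1 le_rfl)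
      rw [he]
      exact ⟨measurable_const, ⟨q0, fun ω => by simp⟩⟩
    have h1 : ∀ n : ℤ, 1 ≤ n →
        (Measurable (Qr n) ∧ ∃ M : ℝ, ∀ ω, |Qr n ω| ≤ M) →
        (Measurable (Qr (n + 1)) ∧ ∃ M : ℝ, ∀ ω, |Qr (n + 1) ω| ≤ M) := by
      intro n hn ih
      obtain ⟨hmeas, M, hM⟩ := ih
      have he : Qr (n + 1) = fun ω =>
          max 0 (Qr n ω + S n ω * X n ω - C n ω * (1 - X n ω)) :=
        funext (hQrec n hn)
      rw [he]
      constructor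
      · exact measurable_const.max ((hmeas.add ((hmeasS n).mul (hmeasX n))).sub
          ((hmeasC n).mul (measurable_const.sub (hmeasX n))))
      · refine ⟨M + 2, fun ω => ?_⟩
        have hb1 := hM ω
        have hb2 := abs_le.mp hb1
        have hb0 : (0 : ℝ) ≤ M := le_trans (abs_nonneg _) hb1
        rw [abs_of_nonneg (le_max_left _ _)]
        apply max_le (by linarith)
        rcases hS n ω with hs | hs <;> rcases hXv n ω with hx | hx <;>
          rcases hC n ω with hc | hc <;> rw [hs, hx, hc] <;> ring_nf <;> linarith
    have base : ∀ n : ℤ, 1 ≤ n →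
        Measurable (Qr n) ∧ ∃ M : ℝ, ∀ ω, |Qr n ω| ≤ M :=
      fun n hn => Int.le_induction h0 h1 n hn
    intro j
    by_cases hj : 1 ≤ j
    · exact base j hj
    · have he : Qr j = fun _ => (q0 : ℝ) := funext (hQinit j (by omega))
      rw [he]
      exact ⟨measurable_const, ⟨q0, fun ω => by simp⟩⟩
  have hintQr : ∀ j, Integrable (Qr j) μ := fun j => hint _ (hQr j).1 (hQr j).2
  -- integrability of Qhat
  have hintterm : ∀ j, Integrable (fun ω => S j ω * p - C j ω * (1 - p)) μ :=
    fun j => ((hintS j).mul_const p).sub ((hintC j).mul_const (1 - p))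
  have hintQhat : ∀ j : ℤ, 1 ≤ j → Integrable (Qhat j) μ := by
    intro j hj
    have he : Qhat j = fun ω =>
        Qr (j - d) ω + ∑ i ∈ Finset.Ico (j - d) j, (S i ω * p - C i ω * (1 - p)) :=
      funext (hQhat j hj)
    rw [he]
    exact (hintQr (j - d)).add (integrable_finset_sum _ fun i _ => hintterm i)
  -- pointwise decomposition: Qhat (k+1) = Qhat k + D
  have hmk : m < k := by omega
  have hdec : ∀ ω, Qhat (k + 1) ω = Qhat k ω + ((Qr (m + 1) ω - Qr m ω)
      + (S k ω * p - C k ω * (1 - p)) - (S m ω * p - C m ω * (1 - p))) := by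
    intro ω
    have h1 := hQhat (k + 1) (by omega) ω
    have h2 := hQhat k hk ω
    have hsub : k + 1 - d = m + 1 := by omega
    rw [hsub] at h1
    have hset1 : Finset.Ico m (k + 1) = insert k (Finset.Ico m k) := by
      ext x; simp only [Finset.mem_Ico, Finset.mem_insert]; omega
    have hset2 : Finset.Ico m (k + 1) = insert m (Finset.Ico (m + 1) (k + 1)) := by
      ext x; simp only [Finset.mem_Ico, Finset.mem_insert]; omega
    have htop : ∑ j ∈ Finset.Ico m (k + 1), (S j ω * p - C j ω * (1 - p))
        = (∑ j ∈ Finset.Ico m k, (S j ω * p - C j ω * (1 - p)))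
          + (S k ω * p - C k ω * (1 - p)) := by
      rw [hset1, Finset.sum_insert (by simp)]; ring
    have hbot : ∑ j ∈ Finset.Ico m (k + 1), (S j ω * p - C j ω * (1 - p))
        = (S m ω * p - C m ω * (1 - p))
          + ∑ j ∈ Finset.Ico (m + 1) (k + 1), (S j ω * p - C j ω * (1 - p)) := by
      rw [hset2, Finset.sum_insert (by simp [Finset.mem_Ico])]
    rw [h1, h2]
    have : ∑ j ∈ Finset.Ico (m + 1) (k + 1), (S j ω * p - C j ω * (1 - p))
        = (∑ j ∈ Finset.Ico m k, (S j ω * p - C j ω * (1 - p)))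
          + (S k ω * p - C k ω * (1 - p)) - (S m ω * p - C m ω * (1 - p)) := by
      rw [← htop, hbot]; ring
    rw [this]; ring
  -- integrate the decomposition
  have hintD : Integrable (fun ω => (Qr (m + 1) ω - Qr m ω)
      + (S k ω * p - C k ω * (1 - p)) - (S m ω * p - C m ω * (1 - p))) μ :=
    (((hintQr (m + 1)).sub (hintQr m)).add (hintterm k)).sub (hintterm m)
  have hsplit : ∫ ω, Qhat (k + 1) ω ∂μ = (∫ ω, Qhat k ω ∂μ)
      + ∫ ω, ((Qr (m + 1) ω - Qr m ω)
        + (S k ω * p - C k ω * (1 - p)) - (S m ω * p - C m ω * (1 - p))) ∂μ := by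
    rw [← integral_add (hintQhat k hk) hintD]
    exact integral_congr_ae (ae_of_all _ hdec)
  rw [hsplit]
  -- integrals of the linear terms
  have hlin : ∀ j : ℤ, ∫ ω, (S j ω * p - C j ω * (1 - p)) ∂μ
      = p * (∫ ω, S j ω ∂μ) - (1 - p) * (∫ ω, C j ω ∂μ) := by
    intro j
    rw [integral_sub ((hintS j).mul_const p) ((hintC j).mul_const (1 - p)),
      integral_mul_const, integral_mul_const]
    ring
  have hA : Integrable (fun ω => Qr (m + 1) ω - Qr m ω) μ := (hintQr (m + 1)).sub (hintQr m)
  have hAB : Integrable (fun ω => Qr (m + 1) ω - Qr m ω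
      + (S k ω * p - C k ω * (1 - p))) μ := hA.add (hintterm k)
  have e1 : ∫ ω, ((Qr (m + 1) ω - Qr m ω)
      + (S k ω * p - C k ω * (1 - p)) - (S m ω * p - C m ω * (1 - p))) ∂μ
      = (∫ ω, ((Qr (m + 1) ω - Qr m ω) + (S k ω * p - C k ω * (1 - p))) ∂μ)
        - ∫ ω, (S m ω * p - C m ω * (1 - p)) ∂μ := integral_sub hAB (hintterm m)
  have e2 : ∫ ω, ((Qr (m + 1) ω - Qr m ω) + (S k ω * p - C k ω * (1 - p))) ∂μ
      = (∫ ω, (Qr (m + 1) ω - Qr m ω) ∂μ) + ∫ ω, (S k ω * p - C k ω * (1 - p)) ∂μ :=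
    integral_add hA (hintterm k)
  have hDsplit : ∫ ω, ((Qr (m + 1) ω - Qr m ω)
      + (S k ω * p - C k ω * (1 - p)) - (S m ω * p - C m ω * (1 - p))) ∂μ
      = (∫ ω, (Qr (m + 1) ω - Qr m ω) ∂μ)
        + (p * (∫ ω, S k ω ∂μ) - (1 - p) * (∫ ω, C k ω ∂μ))
        - (p * (∫ ω, S m ω ∂μ) - (1 - p) * (∫ ω, C m ω ∂μ)) := by
    rw [e1, e2, hlin, hlin]
  rw [hDsplit]
  -- key drift bound: ∫ (Qr (m+1) - Qr m) ≥ p ∫ S m − (1−p) ∫ C m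
  have hkey : p * (∫ ω, S m ω ∂μ) - (1 - p) * (∫ ω, C m ω ∂μ)
      ≤ ∫ ω, (Qr (m + 1) ω - Qr m ω) ∂μ := by
    by_cases hm1 : 1 ≤ m
    · -- use the recursion and independence
      have hptwise : ∀ ω, S m ω * X m ω - C m ω * (1 - X m ω)
          ≤ Qr (m + 1) ω - Qr m ω := by
        intro ω
        have := hQrec m hm1 ω
        rw [this]
        have := le_max_right (0 : ℝ) (Qr m ω + S m ω * X m ω - C m ω * (1 - X m ω))
        linarith
      have hintlhs : Integrable (fun ω => S m ω * X m ω - C m ω * (1 - X m ω)) μ := by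
        apply hint
        · exact ((hmeasS m).mul (hmeasX m)).sub
            ((hmeasC m).mul (measurable_const.sub (hmeasX m)))
        · refine ⟨2, fun ω => ?_⟩
          rcases hS m ω with hs | hs <;> rcases hXv m ω with hx | hx <;>
            rcases hC m ω with hc | hc <;> rw [hs, hx, hc] <;> norm_num
      have hmono : ∫ ω, (S m ω * X m ω - C m ω * (1 - X m ω)) ∂μ
          ≤ ∫ ω, (Qr (m + 1) ω - Qr m ω) ∂μ :=
        integral_mono hintlhs ((hintQr (m + 1)).sub (hintQr m)) hptwise
      -- compute the LHS using independence
      have hindS : IndepFun (X m) (S m) μ := by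
        have := hXindep.comp measurable_id (measurable_fst : Measurable
          (Prod.fst : ℝ × ℝ → ℝ))
        exact this
      have hindC : IndepFun (X m) (C m) μ := by
        have := hXindep.comp measurable_id (measurable_snd : Measurable
          (Prod.snd : ℝ × ℝ → ℝ))
        exact this
      have hXS : ∫ ω, X m ω * S m ω ∂μ = p * ∫ ω, S m ω ∂μ := by
        rw [hindS.integral_fun_mul_eq_mul_integral (hintX m).aestronglyMeasurable
          (hintS m).aestronglyMeasurable, hXmean]
      have hXC : ∫ ω, X m ω * C m ω ∂μ = p * ∫ ω, C m ω ∂μ := by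
        rw [hindC.integral_fun_mul_eq_mul_integral (hintX m).aestronglyMeasurable
          (hintC m).aestronglyMeasurable, hXmean]
      have hintXS : Integrable (fun ω => X m ω * S m ω) μ := by
        apply hint _ ((hmeasX m).mul (hmeasS m))
        refine ⟨1, fun ω => ?_⟩
        rcases hXv m ω with hx | hx <;> rcases hS m ω with hs | hs <;>
          rw [Pi.mul_apply, hx, hs] <;> norm_num
      have hintXC : Integrable (fun ω => X m ω * C m ω) μ := by
        apply hint _ ((hmeasX m).mul (hmeasC m))
        refine ⟨1, fun ω => ?_⟩
        rcases hXv m ω with hx | hx <;> rcases hC m ω with hc | hc <;>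
          rw [Pi.mul_apply, hx, hc] <;> norm_num
      have hstep : ∫ ω, (S m ω * X m ω - C m ω * (1 - X m ω)) ∂μ
          = ∫ ω, (X m ω * S m ω - (C m ω - X m ω * C m ω)) ∂μ :=
        integral_congr_ae (ae_of_all _ fun ω => by ring)
      have hstep2 : ∫ ω, (X m ω * S m ω - (C m ω - X m ω * C m ω)) ∂μ
          = (∫ ω, X m ω * S m ω ∂μ) - ∫ ω, (C m ω - X m ω * C m ω) ∂μ :=
        integral_sub hintXS ((hintC m).sub hintXC)
      have hstep3 : ∫ ω, (C m ω - X m ω * C m ω) ∂μ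
          = (∫ ω, C m ω ∂μ) - ∫ ω, X m ω * C m ω ∂μ := integral_sub (hintC m) hintXC
      have hcomp : ∫ ω, (S m ω * X m ω - C m ω * (1 - X m ω)) ∂μ
          = p * (∫ ω, S m ω ∂μ) - (1 - p) * (∫ ω, C m ω ∂μ) := by
        rw [hstep, hstep2, hstep3, hXS, hXC]; ring
      rw [hcomp] at hmono
      exact hmono
    · -- m ≤ 0 : everything is constant / zero
      have hS0' : ∀ ω, S m ω = 0 := hS0 m (by omega)
      have hC0' : ∀ ω, C m ω = 0 := hC0 m (by omega)
      have hQ1 : ∀ ω, Qr (m + 1) ω = (q0 : ℝ) := hQinit (m + 1) (by omega)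
      have hQ2 : ∀ ω, Qr m ω = (q0 : ℝ) := hQinit m (by omega)
      have h0 : ∫ ω, (Qr (m + 1) ω - Qr m ω) ∂μ = 0 := by
        rw [integral_congr_ae (g := fun _ => (0 : ℝ))
          (ae_of_all _ fun ω => by rw [hQ1 ω, hQ2 ω]; ring)]
        simp
      have hS0int : ∫ ω, S m ω ∂μ = 0 := by
        rw [integral_congr_ae (g := fun _ => (0 : ℝ)) (ae_of_all _ hS0')]; simp
      have hC0int : ∫ ω, C m ω ∂μ = 0 := by
        rw [integral_congr_ae (g := fun _ => (0 : ℝ)) (ae_of_all _ hC0')]; simp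
      rw [h0, hS0int, hC0int]
      simp
  linarith
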